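/- For fixed t₁, t₂ ∈ ℝ, the partial derivative of Φ_ρ(t₁, t₂) with respect to ρ ∈ (-1,1) equals (1/(2π√(1-ρ²)))·exp(-(t₁² - 2ρt₁t₂ + t₂²)/(2(1-ρ²))). -/

import Mathlib

/-- Standard normal CDF. -/
noncomputable def stdNormalCDF (t : ℝ) : ℝ :=
  ∫ x in Set.Iic t, (1 / Real.sqrt (2 * Real.pi)) * Real.exp (-x ^ 2 / 2)

/-- Standard bivariate normal density with correlation `ρ`. -/
noncomputable def biNormalDensity (ρ x y : ℝ) : ℝ :=
  (1 / (2 * Real.pi * Real.sqrt (1 - ρ ^ 2))) *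
    Real.exp (-(x ^ 2 - 2 * ρ * x * y + y ^ 2) / (2 * (1 - ρ ^ 2)))

open MeasureTheory Real Set Filter

noncomputable def gauss (x : ℝ) : ℝ := (1 / Real.sqrt (2 * Real.pi)) * Real.exp (-x ^ 2 / 2)

lemma stdNormalCDF_def (t : ℝ) : stdNormalCDF t = ∫ x in Set.Iic t, gauss x := rfl

lemma gauss_integrable : Integrable gauss := by
  have h := (integrable_exp_neg_mul_sq (by norm_num : (0:ℝ) < 1/2)).const_mul
      (1 / Real.sqrt (2 * Real.pi))
  refine h.congr (Filter.Eventually.of_forall fun x => ?_)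
  simp only [gauss]
  congr 1
  ring

lemma gauss_cont : Continuous gauss := by
  unfold gauss; continuity

lemma gauss_pos (x : ℝ) : 0 < gauss x := by
  unfold gauss
  positivity

lemma stdNormalCDF_eq (t : ℝ) :
    stdNormalCDF t = stdNormalCDF 0 + ∫ x in (0:ℝ)..t, gauss x := by
  have h := intervalIntegral.integral_Iic_sub_Iic (a := (0:ℝ)) (b := t) (f := gauss) (μ := volume)
    gauss_integrable.integrableOn gauss_integrable.integrableOn
  rw [stdNormalCDF_def, stdNormalCDF_def]
  linarith [h]

lemma hasDerivAt_stdNormalCDF (u : ℝ) : HasDerivAt stdNormalCDF (gauss u) u := by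
  have : ∀ t, stdNormalCDF t = stdNormalCDF 0 + ∫ x in (0:ℝ)..t, gauss x := stdNormalCDF_eq
  rw [funext this]
  have h : HasDerivAt (fun t => ∫ x in (0:ℝ)..t, gauss x) (gauss u) u := by
    refine intervalIntegral.integral_hasDerivAt_right
      gauss_integrable.intervalIntegrable
      gauss_cont.stronglyMeasurable.stronglyMeasurableAtFilter
      gauss_cont.continuousAt
  simpa using h.const_add (stdNormalCDF 0)

lemma stdNormalCDF_cont : Continuous stdNormalCDF :=
  continuous_iff_continuousAt.2 fun u => (hasDerivAt_stdNormalCDF u).continuousAt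

lemma stdNormalCDF_tendsto_atBot : Tendsto stdNormalCDF atBot (nhds 0) := by
  have h : ∀ t : ℝ, stdNormalCDF t = stdNormalCDF 0 - ∫ x in t..(0:ℝ), gauss x := by
    intro t
    have h := intervalIntegral.integral_Iic_sub_Iic (a := t) (b := (0:ℝ)) (f := gauss) (μ := volume)
      gauss_integrable.integrableOn gauss_integrable.integrableOn
    rw [stdNormalCDF_def, stdNormalCDF_def]
    linarith [h]
  rw [funext h]
  have h2 : Tendsto (fun t : ℝ => ∫ x in t..(0:ℝ), gauss x) atBot (nhds (stdNormalCDF 0)) := by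
    have := MeasureTheory.intervalIntegral_tendsto_integral_Iic (0:ℝ)
      (f := gauss) (μ := volume) gauss_integrable.integrableOn (l := atBot) tendsto_id
    rw [stdNormalCDF_def]
    exact this
  simpa using (tendsto_const_nhds (x := stdNormalCDF 0)).sub h2

lemma abs_stdNormalCDF_le (u : ℝ) : |stdNormalCDF u| ≤ ∫ x, gauss x := by
  have h1 : 0 ≤ stdNormalCDF u :=
    setIntegral_nonneg measurableSet_Iic (fun x _ => (gauss_pos x).le)
  rw [abs_of_nonneg h1]
  exact setIntegral_le_integral gauss_integrable
    (Filter.Eventually.of_forall fun x => (gauss_pos x).le)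

section Inner
variable {r : ℝ} (hr : r ∈ Set.Ioo (-1:ℝ) 1)
include hr

lemma one_sub_sq_pos : 0 < 1 - r ^ 2 := by
  obtain ⟨h1, h2⟩ := hr; nlinarith

lemma sqrt_pos' : 0 < Real.sqrt (1 - r ^ 2) := Real.sqrt_pos.2 (one_sub_sq_pos hr)

lemma sq_sqrt' : Real.sqrt (1 - r ^ 2) ^ 2 = 1 - r ^ 2 :=
  Real.sq_sqrt (one_sub_sq_pos hr).le

lemma density_factor (x y : ℝ) :
    biNormalDensity r x y =
      gauss x * ((1 / Real.sqrt (1 - r ^ 2)) *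
        gauss ((y - r * x) / Real.sqrt (1 - r ^ 2))) := by
  have hs := sqrt_pos' hr
  have hs2 := sq_sqrt' hr
  have h2π : Real.sqrt (2 * Real.pi) ^ 2 = 2 * Real.pi := Real.sq_sqrt (by positivity)
  have hπ := Real.pi_pos
  unfold biNormalDensity gauss
  rw [div_pow, hs2]
  have hexp : -(x ^ 2 - 2 * r * x * y + y ^ 2) / (2 * (1 - r ^ 2)) =
      -x ^ 2 / 2 + -((y - r * x) ^ 2 / (1 - r ^ 2)) / 2 := by
    have h0 : (1:ℝ) - r ^ 2 ≠ 0 := (one_sub_sq_pos hr).ne'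
    field_simp
    ring
  rw [hexp, Real.exp_add]
  have hsq : Real.sqrt (2 * Real.pi) * Real.sqrt (2 * Real.pi) = 2 * Real.pi := by
    nlinarith [h2π]
  field_simp
  have h22 : Real.sqrt 2 * Real.sqrt Real.pi * (Real.sqrt 2 * Real.sqrt Real.pi)
      = 2 * Real.pi := by
    rw [← Real.sqrt_mul (le_of_lt two_pos)]; exact hsq
  exact h2π

lemma integral_gauss_affine (c t : ℝ) :
    ∫ y in Set.Iic t, gauss ((y - c) / Real.sqrt (1 - r ^ 2)) =
      Real.sqrt (1 - r ^ 2) * stdNormalCDF ((t - c) / Real.sqrt (1 - r ^ 2)) := by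
  set s := Real.sqrt (1 - r ^ 2) with hsdef
  have hs := sqrt_pos' hr
  have hint : Integrable (fun y => gauss ((y - c) / s)) :=
    (gauss_integrable.comp_div hs.ne').comp_sub_right c
  have hderiv : ∀ y : ℝ, HasDerivAt (fun y => s * stdNormalCDF ((y - c) / s))
      (gauss ((y - c) / s)) y := by
    intro y
    have hin : HasDerivAt (fun y : ℝ => (y - c) / s) (1 / s) y := by
      simpa using ((hasDerivAt_id y).sub_const c).div_const s
    have := ((hasDerivAt_stdNormalCDF ((y - c) / s)).comp y hin).const_mul s
    refine this.congr_deriv (Eq.symm ?_)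
    field_simp
    exact (mul_div_cancel_left₀ _ hs.ne').symm
  have htend : Tendsto (fun y => s * stdNormalCDF ((y - c) / s)) atBot (nhds 0) := by
    have h1 : Tendsto (fun y : ℝ => (y - c) / s) atBot atBot :=
      (tendsto_atBot_add_const_right _ (-c) tendsto_id).atBot_div_const hs
    have := (stdNormalCDF_tendsto_atBot.comp h1).const_mul s
    simpa using this
  have := MeasureTheory.integral_Iic_of_hasDerivAt_of_tendsto' (a := t)
    (fun y _ => hderiv y) hint.integrableOn htend
  rw [this]; ring

lemma inner_integral (x t : ℝ) :
    ∫ y in Set.Iic t, biNormalDensity r x y =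
      gauss x * stdNormalCDF ((t - r * x) / Real.sqrt (1 - r ^ 2)) := by
  have hs := sqrt_pos' hr
  calc ∫ y in Set.Iic t, biNormalDensity r x y
      = ∫ y in Set.Iic t, (gauss x * (1 / Real.sqrt (1 - r ^ 2))) *
          gauss ((y - r * x) / Real.sqrt (1 - r ^ 2)) := by
        refine MeasureTheory.setIntegral_congr_fun measurableSet_Iic fun y _ => ?_
        rw [density_factor hr]; ring
    _ = (gauss x * (1 / Real.sqrt (1 - r ^ 2))) *
          ∫ y in Set.Iic t, gauss ((y - r * x) / Real.sqrt (1 - r ^ 2)) :=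
        MeasureTheory.integral_const_mul _ _
    _ = gauss x * stdNormalCDF ((t - r * x) / Real.sqrt (1 - r ^ 2)) := by
        rw [integral_gauss_affine hr]
        field_simp

end Inner

section Deriv
variable {r : ℝ} (hr : r ∈ Set.Ioo (-1:ℝ) 1)
include hr

lemma hasDerivAt_arg (x t₂ : ℝ) :
    HasDerivAt (fun r : ℝ => (t₂ - r * x) / Real.sqrt (1 - r ^ 2))
      ((r * t₂ - x) / ((1 - r ^ 2) * Real.sqrt (1 - r ^ 2))) r := by
  have h0 := one_sub_sq_pos hr
  have hs := sqrt_pos' hr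
  have hs2 := sq_sqrt' hr
  have hu : HasDerivAt (fun r : ℝ => t₂ - r * x) (-x) r := by
    simpa using ((hasDerivAt_id r).mul_const x).const_sub t₂
  have hw : HasDerivAt (fun r : ℝ => 1 - r ^ 2) (-(2 * r)) r := by
    simpa using (hasDerivAt_pow 2 r).const_sub 1
  have hv : HasDerivAt (fun r : ℝ => Real.sqrt (1 - r ^ 2))
      (-(2 * r) / (2 * Real.sqrt (1 - r ^ 2))) r := by
    have := (Real.hasDerivAt_sqrt h0.ne').comp r hw
    refine this.congr_deriv (Eq.symm ?_)
    field_simp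
  have := hu.div hv hs.ne'
  refine this.congr_deriv (Eq.symm ?_)
  rw [div_eq_div_iff (by positivity) (by positivity)]
  field_simp
  linear_combination (2 * x * (1 - r ^ 2) * Real.sqrt (1 - r ^ 2) + (r * t₂ - r ^ 2 * x + 2 * r ^ 2 * x * Real.sqrt (1 - r ^ 2) - 2 * x * Real.sqrt (1 - r ^ 2))) *
    (Real.mul_self_sqrt h0.le)

lemma hasDerivAt_F (x t₂ : ℝ) :
    HasDerivAt (fun r : ℝ => gauss x *
        stdNormalCDF ((t₂ - r * x) / Real.sqrt (1 - r ^ 2)))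
      (biNormalDensity r x t₂ * ((r * t₂ - x) / (1 - r ^ 2))) r := by
  have h0 := one_sub_sq_pos hr
  have hs := sqrt_pos' hr
  have h := (((hasDerivAt_stdNormalCDF ((t₂ - r * x) / Real.sqrt (1 - r ^ 2))).comp r
    (hasDerivAt_arg hr x t₂)).const_mul (gauss x))
  refine h.congr_deriv (Eq.symm ?_)
  rw [density_factor hr]
  field_simp

lemma hasDerivAt_density_x (x t₂ : ℝ) :
    HasDerivAt (fun x : ℝ => biNormalDensity r x t₂)
      (biNormalDensity r x t₂ * ((r * t₂ - x) / (1 - r ^ 2))) x := by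
  have h0 := one_sub_sq_pos hr
  have hp : HasDerivAt (fun x : ℝ => x ^ 2 - 2 * r * x * t₂ + t₂ ^ 2)
      (2 * x - 2 * r * t₂) x := by
    have := ((hasDerivAt_pow 2 x).sub
      (((hasDerivAt_id x).const_mul (2 * r)).mul_const t₂)).add_const (t₂ ^ 2)
    refine this.congr_deriv (Eq.symm ?_)
    ring
  have hq : HasDerivAt (fun x : ℝ => -(x ^ 2 - 2 * r * x * t₂ + t₂ ^ 2) / (2 * (1 - r ^ 2)))
      ((r * t₂ - x) / (1 - r ^ 2)) x := by
    have := (hp.neg).div_const (2 * (1 - r ^ 2))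
    refine this.congr_deriv (Eq.symm ?_)
    field_simp
    ring
  have := (hq.exp).const_mul (1 / (2 * Real.pi * Real.sqrt (1 - r ^ 2)))
  refine this.congr_deriv (Eq.symm ?_)
  unfold biNormalDensity
  ring

end Deriv

/-- `Φ_ρ(t₁, t₂) = P[X ≤ t₁ ∧ Y ≤ t₂]` for jointly standard Gaussian `(X, Y)` with
correlation `ρ`.  For `ρ = ±1` the (degenerate) joint distribution gives the
indicated closed forms; for `ρ ∈ (-1, 1)` it is the double integral of the density. -/
noncomputable def biNormalCDF (ρ t₁ t₂ : ℝ) : ℝ :=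
  if ρ = 1 then stdNormalCDF (min t₁ t₂)
  else if ρ = -1 then max (stdNormalCDF t₁ + stdNormalCDF t₂ - 1) 0
  else ∫ x in Set.Iic t₁, ∫ y in Set.Iic t₂, biNormalDensity ρ x y

lemma exp_quad_le {r x t₂ : ℝ} (h0 : 0 < 1 - r ^ 2) :
    Real.exp (-(x ^ 2 - 2 * r * x * t₂ + t₂ ^ 2) / (2 * (1 - r ^ 2))) ≤
      Real.exp (-(1/4) * x ^ 2) := by
  apply Real.exp_le_exp.2
  rw [div_le_iff₀ (by positivity)]
  nlinarith [sq_nonneg (2 * r * x - 2 * t₂), mul_nonneg (sq_nonneg x) h0.le]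

lemma density_cont (ρ t₂ : ℝ) : Continuous fun x => biNormalDensity ρ x t₂ := by
  unfold biNormalDensity
  exact continuous_const.mul (((by fun_prop :
    Continuous fun x : ℝ => -(x ^ 2 - 2 * ρ * x * t₂ + t₂ ^ 2)).div_const _).rexp)

set_option maxHeartbeats 1000000 in
/-- The partial derivative of `Φ_ρ(t₁, t₂)` with respect to the correlation
`ρ ∈ (-1, 1)` equals `(1/(2π√(1-ρ²))) · exp(-(t₁² - 2ρt₁t₂ + t₂²)/(2(1-ρ²)))`. -/
theorem biNormalCDF_hasDerivAt_rho (ρ t₁ t₂ : ℝ) (hρ : ρ ∈ Set.Ioo (-1 : ℝ) 1) :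
    HasDerivAt (fun r => biNormalCDF r t₁ t₂)
      ((1 / (2 * Real.pi * Real.sqrt (1 - ρ ^ 2))) *
        Real.exp (-(t₁ ^ 2 - 2 * ρ * t₁ * t₂ + t₂ ^ 2) / (2 * (1 - ρ ^ 2)))) ρ := by
  obtain ⟨hρ1, hρ2⟩ := hρ
  have habs : |ρ| < 1 := abs_lt.2 ⟨hρ1, hρ2⟩
  obtain ⟨δ, hδdef⟩ : ∃ δ : ℝ, δ = (1 - |ρ|) / 2 := ⟨_, rfl⟩
  obtain ⟨M, hMdef⟩ : ∃ M : ℝ, M = (1 + |ρ|) / 2 := ⟨_, rfl⟩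
  obtain ⟨c, hcdef⟩ : ∃ c : ℝ, c = 1 - M ^ 2 := ⟨_, rfl⟩
  have hδ : 0 < δ := by rw [hδdef]; linarith
  have hM1 : M < 1 := by rw [hMdef]; linarith
  have hM0 : 0 ≤ M := by rw [hMdef]; positivity
  have hc : 0 < c := by rw [hcdef]; nlinarith
  have hball : ∀ r ∈ Metric.ball ρ δ, |r| < M := by
    intro r hrb
    rw [Metric.mem_ball, Real.dist_eq] at hrb
    calc |r| = |r - ρ + ρ| := by ring_nf
      _ ≤ |r - ρ| + |ρ| := abs_add_le _ _
      _ < δ + |ρ| := by linarith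
      _ = M := by rw [hδdef, hMdef]; ring
  have hIoo : ∀ r ∈ Metric.ball ρ δ, r ∈ Set.Ioo (-1:ℝ) 1 := fun r h =>
    abs_lt.1 ((hball r h).trans hM1)
  have hcr : ∀ r ∈ Metric.ball ρ δ, c ≤ 1 - r ^ 2 := by
    intro r h
    have h1 := hball r h
    have h2 : r ^ 2 ≤ M ^ 2 := by nlinarith [sq_abs r, abs_nonneg r]
    rw [hcdef]; linarith
  have hρball : ρ ∈ Metric.ball ρ δ := Metric.mem_ball_self hδ
  have hρIoo : ρ ∈ Set.Ioo (-1:ℝ) 1 := ⟨hρ1, hρ2⟩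
  have hπ := Real.pi_pos
  obtain ⟨B, hBdef⟩ : ∃ B : ℝ → ℝ, B = fun x =>
      1 / (2 * Real.pi * Real.sqrt c) * Real.exp (-(1/4) * x ^ 2) * ((|t₂| + |x|) / c) :=
    ⟨_, rfl⟩
  have hbound : ∀ x : ℝ, ∀ r ∈ Metric.ball ρ δ,
      ‖biNormalDensity r x t₂ * ((r * t₂ - x) / (1 - r ^ 2))‖ ≤ B x := by
    intro x r hrb
    have h0 := one_sub_sq_pos (hIoo r hrb)
    have hcle := hcr r hrb
    have habsr : |r| < 1 := (hball r hrb).trans hM1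
    have hnorm : ‖biNormalDensity r x t₂ * ((r * t₂ - x) / (1 - r ^ 2))‖ =
        (1 / (2 * Real.pi * Real.sqrt (1 - r ^ 2))) *
          Real.exp (-(x ^ 2 - 2 * r * x * t₂ + t₂ ^ 2) / (2 * (1 - r ^ 2))) *
          (|r * t₂ - x| / (1 - r ^ 2)) := by
      rw [Real.norm_eq_abs, abs_mul, abs_div, abs_of_pos h0]
      unfold biNormalDensity
      rw [abs_mul, abs_of_pos (by positivity), abs_of_pos (Real.exp_pos _)]
    rw [hnorm, hBdef]
    have hsqle : Real.sqrt c ≤ Real.sqrt (1 - r ^ 2) := Real.sqrt_le_sqrt hcle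
    have ha : 1 / (2 * Real.pi * Real.sqrt (1 - r ^ 2)) ≤ 1 / (2 * Real.pi * Real.sqrt c) := by
      apply one_div_le_one_div_of_le (by positivity)
      have h2π : (0:ℝ) ≤ 2 * Real.pi := by positivity
      exact mul_le_mul_of_nonneg_left hsqle h2π
    have habsle : |r * t₂ - x| ≤ |t₂| + |x| := by
      calc |r * t₂ - x| ≤ |r * t₂| + |x| := abs_sub _ _
        _ = |r| * |t₂| + |x| := by rw [abs_mul]
        _ ≤ 1 * |t₂| + |x| := by
            have := abs_nonneg t₂
            nlinarith
        _ = |t₂| + |x| := by ring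
    have hq : |r * t₂ - x| / (1 - r ^ 2) ≤ (|t₂| + |x|) / c :=
      div_le_div₀ (by positivity) habsle hc hcle
    exact mul_le_mul (mul_le_mul ha (exp_quad_le h0) (Real.exp_pos _).le (by positivity))
      hq (by positivity) (by positivity)
  have hBint : Integrable B := by
    have h1 : Integrable (fun x : ℝ => Real.exp (-(1/4) * x ^ 2) * |t₂|) :=
      (integrable_exp_neg_mul_sq (by norm_num : (0:ℝ) < 1/4)).mul_const _
    have h2 : Integrable (fun x : ℝ => |x| * Real.exp (-(1/4) * x ^ 2)) := by
      have := (integrable_mul_exp_neg_mul_sq (by norm_num : (0:ℝ) < 1/4)).abs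
      refine this.congr (Filter.Eventually.of_forall fun x => ?_)
      simp [abs_mul, abs_of_pos (Real.exp_pos _)]
    have h3 := (h1.add h2).const_mul (1 / (2 * Real.pi * Real.sqrt c) / c)
    refine h3.congr (Filter.Eventually.of_forall fun x => ?_)
    simp only [hBdef, Pi.add_apply]
    field_simp
  have hFcont : ∀ r : ℝ, Continuous fun x =>
      gauss x * stdNormalCDF ((t₂ - r * x) / Real.sqrt (1 - r ^ 2)) := fun r =>
    gauss_cont.mul (stdNormalCDF_cont.comp
      ((continuous_const.sub (continuous_const.mul continuous_id)).div_const _))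
  have hF'cont : Continuous fun x => biNormalDensity ρ x t₂ * ((ρ * t₂ - x) / (1 - ρ ^ 2)) :=
    (density_cont ρ t₂).mul ((continuous_const.sub continuous_id).div_const _)
  have key := hasDerivAt_integral_of_dominated_loc_of_deriv_le (𝕜 := ℝ)
    (μ := volume.restrict (Set.Iic t₁)) (x₀ := ρ) (s := Metric.ball ρ δ) (bound := B)
    (F := fun r x => gauss x * stdNormalCDF ((t₂ - r * x) / Real.sqrt (1 - r ^ 2)))
    (F' := fun r x => biNormalDensity r x t₂ * ((r * t₂ - x) / (1 - r ^ 2)))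
    (Metric.ball_mem_nhds ρ hδ)
    (Filter.Eventually.of_forall fun r => ((hFcont r).aestronglyMeasurable).restrict)
    (by
      refine Integrable.mono' ((gauss_integrable.const_mul (∫ x, gauss x)).restrict)
        ((hFcont ρ).aestronglyMeasurable.restrict)
        (Filter.Eventually.of_forall fun x => ?_)
      rw [Real.norm_eq_abs, abs_mul, abs_of_pos (gauss_pos x)]
      calc gauss x * |stdNormalCDF ((t₂ - ρ * x) / Real.sqrt (1 - ρ ^ 2))|
          ≤ gauss x * (∫ x, gauss x) := by
            have := abs_stdNormalCDF_le ((t₂ - ρ * x) / Real.sqrt (1 - ρ ^ 2))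
            nlinarith [gauss_pos x, abs_nonneg (stdNormalCDF ((t₂ - ρ * x) / Real.sqrt (1 - ρ ^ 2)))]
        _ = (∫ x, gauss x) * gauss x := by ring)
    (hF'cont.aestronglyMeasurable.restrict)
    (Filter.Eventually.of_forall fun x r hr => hbound x r hr)
    hBint.restrict
    (Filter.Eventually.of_forall fun x r hr => hasDerivAt_F (hIoo r hr) x t₂)
  have htend0 : Tendsto (fun x => biNormalDensity ρ x t₂) atBot (nhds 0) := by
    have hup : Tendsto (fun x : ℝ =>
        (1 / (2 * Real.pi * Real.sqrt (1 - ρ ^ 2))) * Real.exp (-(1/4) * x ^ 2))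
        atBot (nhds 0) := by
      have hx2 : Tendsto (fun x : ℝ => -(1/4) * x ^ 2) atBot atBot := by
        have h1 : Tendsto (fun x : ℝ => x ^ 2) atBot atTop := by
          have h := (tendsto_pow_atTop (n := 2) (by norm_num)).comp
            (tendsto_neg_atBot_atTop : Tendsto (fun x : ℝ => -x) atBot atTop)
          refine h.congr fun x => ?_
          simp [Function.comp]
        have h2 := h1.const_mul_atTop (by norm_num : (0:ℝ) < 1/4)
        have := tendsto_neg_atTop_atBot.comp h2
        refine this.congr fun x => ?_
        simp only [Function.comp]
        ring
      have := Real.tendsto_exp_atBot.comp hx2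
      simpa using (this.const_mul (1 / (2 * Real.pi * Real.sqrt (1 - ρ ^ 2))))
    have h0 := one_sub_sq_pos hρIoo
    refine tendsto_of_tendsto_of_tendsto_of_le_of_le tendsto_const_nhds hup
      (fun x => ?_) (fun x => ?_)
    · unfold biNormalDensity; positivity
    · unfold biNormalDensity
      have hpos : (0:ℝ) < 1 / (2 * Real.pi * Real.sqrt (1 - ρ ^ 2)) := by positivity
      exact mul_le_mul_of_nonneg_left (exp_quad_le h0) hpos.le
  have hF'int : MeasureTheory.IntegrableOn
      (fun x => biNormalDensity ρ x t₂ * ((ρ * t₂ - x) / (1 - ρ ^ 2))) (Set.Iic t₁) :=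
    Integrable.mono' hBint.restrict (hF'cont.aestronglyMeasurable.restrict)
      (Filter.Eventually.of_forall fun x => hbound x ρ hρball)
  have hval : (∫ x in Set.Iic t₁, biNormalDensity ρ x t₂ * ((ρ * t₂ - x) / (1 - ρ ^ 2))) =
      biNormalDensity ρ t₁ t₂ := by
    have := MeasureTheory.integral_Iic_of_hasDerivAt_of_tendsto' (a := t₁)
      (f := fun x => biNormalDensity ρ x t₂)
      (fun x _ => hasDerivAt_density_x hρIoo x t₂) hF'int htend0
    rw [this, sub_zero]
  rw [hval] at key
  have heq : (fun r => biNormalCDF r t₁ t₂) =ᶠ[nhds ρ]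
      (fun r => ∫ x in Set.Iic t₁,
        gauss x * stdNormalCDF ((t₂ - r * x) / Real.sqrt (1 - r ^ 2))) := by
    filter_upwards [isOpen_Ioo.mem_nhds hρIoo] with r hr'
    have hne1 : r ≠ 1 := ne_of_lt hr'.2
    have hne2 : r ≠ -1 := ne_of_gt hr'.1
    unfold biNormalCDF
    rw [if_neg hne1, if_neg hne2]
    exact MeasureTheory.setIntegral_congr_fun measurableSet_Iic
      fun x _ => inner_integral hr' x t₂
  have final := key.2.congr_of_eventuallyEq heq
  exact final
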